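/- Let a group G act by isometries on an ℝ-tree T, and let T₁ and T₂ be stable subtrees of T whose intersection T₁ ∩ T₂ contains more than one point. Then T₁ ∪ T₂ is a stable subtree of T. -/

import Mathlib

/-- An *arc* from `x` to `y` in a metric space: the image of a topological embedding of a
closed real interval `[a,b]` (with `a = b` allowed) sending `a` to `x` and `b` to `y`.
Since `[a,b]` is compact and a metric space is Hausdorff, a topological embedding is the
same as a continuous injective map. -/
def IsArcIn {T : Type*} [MetricSpace T] (x y : T) (S : Set T) : Prop :=
  ∃ a b : ℝ, a ≤ b ∧ ∃ α : ℝ → T,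
    ContinuousOn α (Set.Icc a b) ∧ Set.InjOn α (Set.Icc a b) ∧
    α '' Set.Icc a b = S ∧ α a = x ∧ α b = y

/-- A *geodesic segment* from `x` to `y`: the image of an isometric embedding of a closed
real interval sending the endpoints to `x` and `y`. -/
def IsGeodesicSegmentIn {T : Type*} [MetricSpace T] (x y : T) (S : Set T) : Prop :=
  ∃ a b : ℝ, a ≤ b ∧ ∃ α : ℝ → T,
    (∀ s ∈ Set.Icc a b, ∀ t ∈ Set.Icc a b, dist (α s) (α t) = |s - t|) ∧
    α '' Set.Icc a b = S ∧ α a = x ∧ α b = y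

/-- An ℝ-tree: a metric space in which any two points are joined by a unique arc,
and this arc is a geodesic segment. -/
def IsRTree (T : Type*) [MetricSpace T] : Prop :=
  ∀ x y : T, (∃! S : Set T, IsArcIn x y S) ∧
    ∀ S : Set T, IsArcIn x y S → IsGeodesicSegmentIn x y S

/-- The Gromov product `(x·y)_w = (d(w,x) + d(w,y) − d(x,y))/2`. -/
noncomputable def gromovProd {T : Type*} [MetricSpace T] (w x y : T) : ℝ :=
  (dist w x + dist w y - dist x y) / 2

/-- A subset of an ℝ-tree is *nondegenerate* if it contains more than one point. -/
def Nondegenerate {T : Type*} (S : Set T) : Prop :=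
  ∃ x ∈ S, ∃ y ∈ S, x ≠ y

/-- The pointwise stabilizer `Fix(S) = {g : G | g·x = x for all x ∈ S}` of a subset of an
ℝ-tree under an isometric action `ρ`. -/
def fixOf {G T : Type*} [Group G] [MetricSpace T] (ρ : G →* (T ≃ᵢ T)) (S : Set T) :
    Set G :=
  {g : G | ∀ x ∈ S, ρ g x = x}

/-- A *stable subtree* for the action `ρ`: a nondegenerate subtree (nonempty connected
subset with more than one point) `S` such that every nondegenerate subtree of `S` has the
same pointwise stabilizer as `S`. -/
def IsStableSubtree {G T : Type*} [Group G] [MetricSpace T] (ρ : G →* (T ≃ᵢ T))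
    (S : Set T) : Prop :=
  IsConnected S ∧ Nondegenerate S ∧
    ∀ S' : Set T, S' ⊆ S → IsConnected S' → Nondegenerate S' → fixOf ρ S' = fixOf ρ S

namespace RTreeAux

variable {T : Type*} [MetricSpace T]

/-- `α` is an isometric parametrization on `[a,b]`. -/
def IsoOn (α : ℝ → T) (a b : ℝ) : Prop :=
  ∀ s ∈ Set.Icc a b, ∀ t ∈ Set.Icc a b, dist (α s) (α t) = |s - t|

theorem IsoOn.mono {α : ℝ → T} {a b a' b' : ℝ} (h : IsoOn α a b)
    (h1 : a ≤ a') (h2 : b' ≤ b) : IsoOn α a' b' :=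
  fun s hs t ht => h s ⟨h1.trans hs.1, hs.2.trans h2⟩ t ⟨h1.trans ht.1, ht.2.trans h2⟩

theorem IsoOn.continuousOn {α : ℝ → T} {a b : ℝ} (h : IsoOn α a b) :
    ContinuousOn α (Set.Icc a b) := by
  have hl : LipschitzOnWith 1 α (Set.Icc a b) := by
    apply LipschitzOnWith.of_dist_le_mul
    intro s hs t ht
    rw [h s hs t ht, Real.dist_eq, NNReal.coe_one, one_mul]
  exact hl.continuousOn

theorem IsoOn.injOn {α : ℝ → T} {a b : ℝ} (h : IsoOn α a b) :
    Set.InjOn α (Set.Icc a b) := by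
  intro s hs t ht he
  have h2 := h s hs t ht
  rw [he, dist_self] at h2
  have h3 : s - t = 0 := abs_eq_zero.mp h2.symm
  linarith

theorem IsoOn.dist_zero {x : T} {α : ℝ → T} {b : ℝ} (h : IsoOn α 0 b) (hx : α 0 = x)
    {t : ℝ} (ht : t ∈ Set.Icc 0 b) : dist x (α t) = t := by
  rw [← hx, h 0 ⟨le_rfl, ht.1.trans ht.2⟩ t ht, zero_sub, abs_neg, abs_of_nonneg ht.1]

theorem isArc_of_iso {α : ℝ → T} {a b : ℝ} (h : IsoOn α a b) (hab : a ≤ b) :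
    IsArcIn (α a) (α b) (α '' Set.Icc a b) :=
  ⟨a, b, hab, α, h.continuousOn, h.injOn, rfl, rfl, rfl⟩

/-- Every pair of points is joined by an arc with a canonical isometric parametrization
on `[0, dist x y]`, and this arc is unique. -/
theorem exists_param (h : IsRTree T) (x y : T) :
    ∃ δ : ℝ → T, IsoOn δ 0 (dist x y) ∧ δ 0 = x ∧ δ (dist x y) = y ∧
      ∀ S, IsArcIn x y S → S = δ '' Set.Icc 0 (dist x y) := by
  obtain ⟨⟨S, hS, huniq⟩, hgeo⟩ := h x y
  obtain ⟨a, b, hab, α, hiso, him, ha, hb⟩ := hgeo S hS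
  have hba : b - a = dist x y := by
    have h1 := hiso a ⟨le_refl a, hab⟩ b ⟨hab, le_refl b⟩
    rw [ha, hb, abs_of_nonpos (by linarith)] at h1
    linarith
  refine ⟨fun t => α (a + t), ?_, by simpa using ha, ?_, ?_⟩
  · intro s hs t ht
    have := hiso (a + s) ⟨by linarith [hs.1], by linarith [hs.2]⟩
      (a + t) ⟨by linarith [ht.1], by linarith [ht.2]⟩
    rw [this]
    congr 1
    ring
  · show α (a + dist x y) = y
    rw [← hba, show a + (b - a) = b by ring, hb]
  · intro S' hS'
    rw [huniq S' hS', ← him]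
    have himg : (fun t => α (a + t)) '' Set.Icc 0 (dist x y) = α '' Set.Icc a b := by
      rw [show (fun t => α (a + t)) = α ∘ (fun t => a + t) from rfl, Set.image_comp,
        Set.image_const_add_Icc, add_zero, ← hba, show a + (b - a) = b by ring]
    rw [himg]



/-- Concatenation: if `d(x,p) + d(p,z) = d(x,z)` then the two segments glue to the
unique arc from `x` to `z`, isometrically parametrized, passing through `p`. -/
theorem concat (h : IsRTree T) {x p z : T} (hd : dist x p + dist p z = dist x z) :
    ∃ δ : ℝ → T, IsoOn δ 0 (dist x z) ∧ δ 0 = x ∧ δ (dist x z) = z ∧ δ (dist x p) = p ∧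
      ∀ S, IsArcIn x z S → S = δ '' Set.Icc 0 (dist x z) := by
  obtain ⟨β, hβ, hβ0, hβ1, _⟩ := exists_param h x p
  obtain ⟨γ, hγ, hγ0, hγ1, _⟩ := exists_param h p z
  set t₀ := dist x p with ht₀def
  set L := dist p z with hLdef
  set c := dist x z with hcdef
  have ht₀ : 0 ≤ t₀ := dist_nonneg
  have hL : 0 ≤ L := dist_nonneg
  have htc : t₀ ≤ c := by linarith
  set δ : ℝ → T := fun t => if t ≤ t₀ then β t else γ (t - t₀) with hδdef
  have hdx : ∀ t ∈ Set.Icc 0 c, dist x (δ t) = t := by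
    intro t ht
    by_cases h' : t ≤ t₀
    · simp only [hδdef, if_pos h']
      exact hβ.dist_zero hβ0 ⟨ht.1, h'⟩
    · simp only [hδdef, if_neg h']
      push_neg at h'
      have hmem : t - t₀ ∈ Set.Icc 0 L := ⟨by linarith, by linarith [ht.2]⟩
      have h1 : dist p (γ (t - t₀)) = t - t₀ := hγ.dist_zero hγ0 hmem
      have h2 : dist (γ (t - t₀)) z = L - (t - t₀) := by
        have := hγ (t - t₀) hmem L ⟨hL, le_rfl⟩
        rw [hγ1, abs_of_nonpos (by linarith [hmem.2])] at this
        linarith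
      have hub : dist x (γ (t - t₀)) ≤ t := by
        calc dist x (γ (t - t₀)) ≤ dist x p + dist p (γ (t - t₀)) := dist_triangle _ _ _
          _ = t := by rw [h1]; ring
      have hlb : t ≤ dist x (γ (t - t₀)) := by
        have := dist_triangle x (γ (t - t₀)) z
        rw [h2] at this
        linarith
      linarith
  have hisole : ∀ s ∈ Set.Icc 0 c, ∀ t ∈ Set.Icc 0 c, s ≤ t → dist (δ s) (δ t) = t - s := by
    intro s hs t ht hst
    by_cases h1 : t ≤ t₀
    · have h2 : s ≤ t₀ := hst.trans h1
      simp only [hδdef, if_pos h1, if_pos h2]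
      rw [hβ s ⟨hs.1, h2⟩ t ⟨ht.1, h1⟩, abs_of_nonpos (by linarith)]
      ring
    · push_neg at h1
      by_cases h2 : s ≤ t₀
      · simp only [hδdef, if_pos h2, if_neg (not_le.mpr h1)]
        have hmem : t - t₀ ∈ Set.Icc 0 L := ⟨by linarith, by linarith [ht.2]⟩
        have e1 : dist (β s) p = t₀ - s := by
          have := hβ s ⟨hs.1, h2⟩ t₀ ⟨ht₀, le_rfl⟩
          rw [hβ1, abs_of_nonpos (by linarith)] at this
          linarith
        have e2 : dist p (γ (t - t₀)) = t - t₀ := hγ.dist_zero hγ0 hmem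
        have hub : dist (β s) (γ (t - t₀)) ≤ t - s := by
          calc dist (β s) (γ (t - t₀)) ≤ dist (β s) p + dist p (γ (t - t₀)) :=
              dist_triangle _ _ _
            _ = t - s := by rw [e1, e2]; ring
        have hsx : dist x (β s) = s := hβ.dist_zero hβ0 ⟨hs.1, h2⟩
        have hlb : t - s ≤ dist (β s) (γ (t - t₀)) := by
          have htr := dist_triangle x (β s) (γ (t - t₀))
          have hxt : dist x (γ (t - t₀)) = t := by
            have := hdx t ht
            simpa only [hδdef, if_neg (not_le.mpr h1)] using this
          rw [hsx] at htr
          linarith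
        linarith
      · push_neg at h2
        simp only [hδdef, if_neg (not_le.mpr h1), if_neg (not_le.mpr h2)]
        rw [hγ (s - t₀) ⟨by linarith, by linarith [hs.2]⟩ (t - t₀)
          ⟨by linarith, by linarith [ht.2]⟩, abs_of_nonpos (by linarith)]
        ring
  have hiso : IsoOn δ 0 c := by
    intro s hs t ht
    rcases le_total s t with hst | hst
    · rw [hisole s hs t ht hst, abs_of_nonpos (by linarith)]; ring
    · rw [dist_comm, hisole t ht s hs hst, abs_of_nonneg (by linarith)]
  have hδ0 : δ 0 = x := by simp only [hδdef, if_pos ht₀]; exact hβ0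
  have hδt₀ : δ t₀ = p := by simp only [hδdef, if_pos le_rfl]; exact hβ1
  have hδc : δ c = z := by
    by_cases h' : c ≤ t₀
    · have : L = 0 := by linarith
      have hpz : p = z := by rw [← dist_eq_zero]; exact this
      simp only [hδdef, if_pos h']
      have : c = t₀ := le_antisymm h' htc
      rw [this, hβ1, hpz]
    · simp only [hδdef, if_neg h']
      rw [show c - t₀ = L by linarith, hγ1]
  obtain ⟨δ₀, hδ₀, hδ₀0, hδ₀1, huniq₀⟩ := exists_param h x z
  have harc : IsArcIn x z (δ '' Set.Icc 0 c) := by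
    have := isArc_of_iso hiso (dist_nonneg)
    rwa [hδ0, hδc] at this
  refine ⟨δ, hiso, hδ0, hδc, hδt₀, ?_⟩
  intro S hS
  rw [huniq₀ S hS, ← huniq₀ _ harc]

/-- If `d(x,p) + d(p,z) = d(x,z)` then `p` lies on every arc from `x` to `z`. -/
theorem mem_arc (h : IsRTree T) {x p z : T} (hd : dist x p + dist p z = dist x z)
    {S : Set T} (hS : IsArcIn x z S) : p ∈ S := by
  obtain ⟨δ, hiso, h0, h1, hp, huniq⟩ := concat h hd
  rw [huniq S hS]
  exact ⟨dist x p, ⟨dist_nonneg, by linarith [dist_nonneg (x := p) (y := z)]⟩, hp⟩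


/-- Tripod lemma: for any `x z z'` there is a branch point `m` lying (metrically) on
`[x,z]`, `[x,z']` and `[z,z']`. -/
theorem branch (h : IsRTree T) (x z z' : T) :
    ∃ m : T, dist x m + dist m z = dist x z ∧ dist x m + dist m z' = dist x z' ∧
      dist z m + dist m z' = dist z z' := by
  obtain ⟨δ, hδ, hδ0, hδ1, _⟩ := exists_param h x z
  obtain ⟨β, hβ, hβ0, hβ1, _⟩ := exists_param h x z'
  set c := dist x z with hcdef
  set c' := dist x z' with hc'def
  set M := min c c' with hMdef
  set J := {t : ℝ | t ∈ Set.Icc 0 M ∧ δ t = β t} with hJdef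
  have h0J : (0 : ℝ) ∈ J := ⟨⟨le_refl _, le_min dist_nonneg dist_nonneg⟩, by rw [hδ0, hβ0]⟩
  have hJbdd : BddAbove J := ⟨M, fun t ht => ht.1.2⟩
  set t₀ := sSup J with ht₀def
  have ht₀0 : 0 ≤ t₀ := le_csSup hJbdd h0J
  have ht₀M : t₀ ≤ M := csSup_le ⟨0, h0J⟩ fun t ht => ht.1.2
  have ht₀c : t₀ ≤ c := ht₀M.trans (min_le_left _ _)
  have ht₀c' : t₀ ≤ c' := ht₀M.trans (min_le_right _ _)
  have hmem : δ t₀ = β t₀ := by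
    have key : ∀ ε : ℝ, 0 < ε → dist (δ t₀) (β t₀) ≤ 2 * ε := by
      intro ε hε
      obtain ⟨t, htJ, hlt⟩ := exists_lt_of_lt_csSup ⟨0, h0J⟩ (sub_lt_self t₀ hε)
      have htt₀ : t ≤ t₀ := le_csSup hJbdd htJ
      have htIc : t ∈ Set.Icc 0 c := ⟨htJ.1.1, htJ.1.2.trans (min_le_left _ _)⟩
      have htIc' : t ∈ Set.Icc 0 c' := ⟨htJ.1.1, htJ.1.2.trans (min_le_right _ _)⟩
      calc dist (δ t₀) (β t₀) ≤ dist (δ t₀) (δ t) + dist (δ t) (β t₀) := dist_triangle _ _ _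
        _ = dist (δ t₀) (δ t) + dist (β t) (β t₀) := by rw [htJ.2]
        _ = |t₀ - t| + |t - t₀| := by
            rw [hδ t₀ ⟨ht₀0, ht₀c⟩ t htIc, hβ t htIc' t₀ ⟨ht₀0, ht₀c'⟩]
        _ ≤ 2 * ε := by
            rw [abs_of_nonneg (by linarith), abs_of_nonpos (by linarith)]
            linarith
    by_contra hne
    have hpos : 0 < dist (δ t₀) (β t₀) := dist_pos.mpr fun e => hne e
    have := key (dist (δ t₀) (β t₀) / 4) (by linarith)
    linarith
  have hdown : ∀ s, 0 ≤ s → s ≤ t₀ → δ s = β s := by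
    intro s hs0 hst
    have a1 : IsArcIn x (δ t₀) (δ '' Set.Icc 0 t₀) := by
      have := isArc_of_iso (hδ.mono le_rfl ht₀c) ht₀0
      rwa [hδ0] at this
    have a2 : IsArcIn x (δ t₀) (β '' Set.Icc 0 t₀) := by
      have := isArc_of_iso (hβ.mono le_rfl ht₀c') ht₀0
      rwa [hβ0, ← hmem] at this
    obtain ⟨S₀, _, hu⟩ := (h x (δ t₀)).1
    have he : δ '' Set.Icc 0 t₀ = β '' Set.Icc 0 t₀ := by rw [hu _ a1, hu _ a2]
    have hmem2 : δ s ∈ β '' Set.Icc 0 t₀ := he ▸ ⟨s, ⟨hs0, hst⟩, rfl⟩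
    obtain ⟨s', hs', he'⟩ := hmem2
    have hds : dist x (β s') = s' := hβ.dist_zero hβ0 ⟨hs'.1, hs'.2.trans ht₀c'⟩
    have hds2 : dist x (δ s) = s := hδ.dist_zero hδ0 ⟨hs0, hst.trans ht₀c⟩
    rw [he'] at hds
    rw [hds2] at hds
    rw [← he', ← hds]
  set a := t₀ - c with hadef
  set b := c' - t₀ with hbdef
  have ha0 : a ≤ 0 := by simp only [hadef]; linarith
  have hb0 : 0 ≤ b := by simp only [hbdef]; linarith
  have hab : a ≤ b := ha0.trans hb0
  set γ : ℝ → T := fun u => if u ≤ 0 then δ (t₀ - u) else β (t₀ + u) with hγdef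
  have hγa : γ a = z := by
    simp only [hγdef, if_pos ha0]
    rw [show t₀ - a = c by simp only [hadef]; ring, hδ1]
  have hγb : γ b = z' := by
    by_cases hb' : b ≤ 0
    · have hbz : b = 0 := le_antisymm hb' hb0
      simp only [hγdef, if_pos hb']
      rw [hbz, sub_zero, hmem, show t₀ = c' by simp only [hbdef] at hbz; linarith, hβ1]
    · simp only [hγdef, if_neg hb']
      rw [show t₀ + b = c' by simp only [hbdef]; ring, hβ1]
  have hγx : ∀ u ∈ Set.Icc a b, dist x (γ u) = t₀ + |u| := by
    intro u hu
    by_cases h' : u ≤ 0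
    · simp only [hγdef, if_pos h']
      rw [hδ.dist_zero hδ0 ⟨by linarith, by linarith [hu.1]⟩, abs_of_nonpos h']
      ring
    · push_neg at h'
      simp only [hγdef, if_neg (not_le.mpr h')]
      rw [hβ.dist_zero hβ0 ⟨by linarith, by linarith [hu.2]⟩, abs_of_pos h']
  have hγd : ∀ u ∈ Set.Icc a b, ∀ v ∈ Set.Icc a b, u ≤ v → dist (γ u) (γ v) ≤ v - u := by
    intro u hu v hv huv
    by_cases h1 : v ≤ 0
    · have h2 : u ≤ 0 := huv.trans h1
      simp only [hγdef, if_pos h1, if_pos h2]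
      rw [hδ (t₀ - u) ⟨by linarith, by linarith [hu.1]⟩ (t₀ - v) ⟨by linarith, by linarith [hv.1]⟩,
        show t₀ - u - (t₀ - v) = v - u by ring, abs_of_nonneg (by linarith)]
    · push_neg at h1
      by_cases h2 : u ≤ 0
      · have e1 : dist (γ u) (δ t₀) = -u := by
          simp only [hγdef, if_pos h2]
          rw [hδ (t₀ - u) ⟨by linarith, by linarith [hu.1]⟩ t₀ ⟨ht₀0, ht₀c⟩,
            show t₀ - u - t₀ = -u by ring, abs_of_nonneg (by linarith)]
        have e2 : dist (δ t₀) (γ v) = v := by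
          simp only [hγdef, if_neg (not_le.mpr h1)]
          rw [hmem, hβ t₀ ⟨ht₀0, ht₀c'⟩ (t₀ + v) ⟨by linarith, by linarith [hv.2]⟩,
            show t₀ - (t₀ + v) = -v by ring, abs_neg, abs_of_pos h1]
        calc dist (γ u) (γ v) ≤ dist (γ u) (δ t₀) + dist (δ t₀) (γ v) := dist_triangle _ _ _
          _ = v - u := by rw [e1, e2]; ring
      · push_neg at h2
        simp only [hγdef, if_neg (not_le.mpr (h2.trans_le huv)), if_neg (not_le.mpr h2)]
        rw [hβ (t₀ + u) ⟨by linarith, by linarith [hu.2]⟩ (t₀ + v) ⟨by linarith, by linarith [hv.2]⟩,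
          show t₀ + u - (t₀ + v) = u - v by ring, abs_of_nonpos (by linarith)]
        linarith
  have hγinj : Set.InjOn γ (Set.Icc a b) := by
    intro u hu v hv he
    have h1 := hγx u hu
    have h2 := hγx v hv
    rw [he] at h1
    have habs : |u| = |v| := by linarith
    rcases abs_eq_abs.mp habs with he' | he'
    · exact he'
    · rcases lt_trichotomy v 0 with hv0 | hv0 | hv0
      · exfalso
        have hu0 : 0 < u := by rw [he']; linarith
        have heq : β (t₀ + u) = δ (t₀ + u) := by
          have : γ u = β (t₀ + u) := by simp only [hγdef, if_neg (not_le.mpr hu0)]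
          have hγv : γ v = δ (t₀ + u) := by
            simp only [hγdef, if_pos hv0.le]
            rw [show t₀ - v = t₀ + u by rw [he']; ring]
          rw [← this, ← hγv, he]
        have hJmem : t₀ + u ∈ J := by
          refine ⟨⟨by linarith, le_min ?_ ?_⟩, heq.symm⟩
          · have h3 := hv.1; simp only [hadef] at h3; linarith [he']
          · have h3 := hu.2; simp only [hbdef] at h3; linarith
        have := le_csSup hJbdd hJmem
        linarith
      · rw [he', hv0]; ring
      · exfalso
        have hu0 : u < 0 := by rw [he']; linarith
        have heq : δ (t₀ + v) = β (t₀ + v) := by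
          have hγu : γ u = δ (t₀ + v) := by
            simp only [hγdef, if_pos hu0.le]
            rw [show t₀ - u = t₀ + v by rw [he']; ring]
          have hγv : γ v = β (t₀ + v) := by simp only [hγdef, if_neg (not_le.mpr hv0)]
          rw [← hγu, ← hγv, he]
        have hJmem : t₀ + v ∈ J := by
          refine ⟨⟨by linarith, le_min ?_ ?_⟩, heq⟩
          · have h3 := hu.1; simp only [hadef] at h3; linarith [he']
          · have h3 := hv.2; simp only [hbdef] at h3; linarith
        have := le_csSup hJbdd hJmem
        linarith
  have harc : IsArcIn z z' (γ '' Set.Icc a b) := by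
    refine ⟨a, b, hab, γ, ?_, hγinj, rfl, hγa, hγb⟩
    have hl : LipschitzOnWith 1 γ (Set.Icc a b) := by
      apply LipschitzOnWith.of_dist_le_mul
      intro u hu v hv
      rw [NNReal.coe_one, one_mul, Real.dist_eq]
      rcases le_total u v with hle | hle
      · exact (hγd u hu v hv hle).trans (by rw [abs_sub_comm]; exact (le_abs_self _))
      · rw [dist_comm]
        exact (hγd v hv u hu hle).trans (le_abs_self _)
    exact hl.continuousOn
  obtain ⟨a', b', hab', η, hη, himη, ha', hb'⟩ := (h z z').2 _ harc
  have hm0 : δ t₀ ∈ γ '' Set.Icc a b :=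
    ⟨0, ⟨ha0, hb0⟩, by simp only [hγdef, if_pos le_rfl, sub_zero]⟩
  rw [← himη] at hm0
  obtain ⟨s₀, hs₀, hms⟩ := hm0
  have e1 : dist x (δ t₀) = t₀ := hδ.dist_zero hδ0 ⟨ht₀0, ht₀c⟩
  have e2 : dist (δ t₀) z = c - t₀ := by
    rw [← hδ1, hδ t₀ ⟨ht₀0, ht₀c⟩ c ⟨dist_nonneg, le_rfl⟩, abs_of_nonpos (by linarith)]
    ring
  have e3 : dist x (β t₀) = t₀ := hβ.dist_zero hβ0 ⟨ht₀0, ht₀c'⟩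
  have e4 : dist (β t₀) z' = c' - t₀ := by
    rw [← hβ1, hβ t₀ ⟨ht₀0, ht₀c'⟩ c' ⟨dist_nonneg, le_rfl⟩, abs_of_nonpos (by linarith)]
    ring
  refine ⟨δ t₀, by rw [e1, e2]; ring, by rw [hmem, e3, e4]; ring, ?_⟩
  have f1 : dist z (δ t₀) = s₀ - a' := by
    rw [← ha', ← hms, hη a' ⟨le_rfl, hab'⟩ s₀ hs₀, abs_of_nonpos (by linarith [hs₀.1])]
    ring
  have f2 : dist (δ t₀) z' = b' - s₀ := by
    rw [← hb', ← hms, hη s₀ hs₀ b' ⟨hab', le_rfl⟩, abs_of_nonpos (by linarith [hs₀.2])]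
    ring
  have f3 : dist z z' = b' - a' := by
    rw [← ha', ← hb', hη a' ⟨le_rfl, hab'⟩ b' ⟨hab', le_rfl⟩, abs_of_nonpos (by linarith)]
    ring
  rw [f1, f2, f3]
  ring


/-- In an ℝ-tree, any arc between two points of a preconnected set lies in the set. -/
theorem arc_subset (h : IsRTree T) {A : Set T} (hA : IsPreconnected A) {x y : T}
    (hx : x ∈ A) (hy : y ∈ A) {S : Set T} (hS : IsArcIn x y S) : S ⊆ A := by
  intro p hp
  by_contra hpA
  have hpx : p ≠ x := fun e => hpA (e ▸ hx)
  have hpy : p ≠ y := fun e => hpA (e ▸ hy)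
  obtain ⟨δ, hδ, hδ0, hδ1, huniq⟩ := exists_param h x y
  rw [huniq S hS] at hp
  obtain ⟨t₁, ht₁, hpt⟩ := hp
  have hxpd : dist x p = t₁ := by rw [← hpt]; exact hδ.dist_zero hδ0 ht₁
  have hpyd : dist p y = dist x y - t₁ := by
    have h5 := hδ t₁ ht₁ (dist x y) ⟨dist_nonneg, le_rfl⟩
    rw [hpt, hδ1, abs_of_nonpos (by linarith [ht₁.2])] at h5
    linarith
  have hxy : dist x p + dist p y = dist x y := by rw [hxpd, hpyd]; ring
  set W := {w : T | dist x w = dist x p + dist p w} with hWdef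
  have hxp : 0 < dist x p := dist_pos.mpr fun e => hpx e.symm
  have hyW : y ∈ W := by show dist x y = _; linarith
  have hxW : x ∉ W := by
    intro hxw
    have h2 : dist x x = dist x p + dist p x := hxw
    rw [dist_self, dist_comm p x] at h2
    linarith
  set U := ⋃ w ∈ W \ {p}, Metric.ball w (dist p w) with hUdef
  have hUopen : IsOpen U := isOpen_biUnion fun _ _ => Metric.isOpen_ball
  have hUW : U ⊆ W := by
    intro z' hz'
    simp only [hUdef, Set.mem_iUnion, exists_prop] at hz'
    obtain ⟨z, ⟨hzW, hzp⟩, hball⟩ := hz'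
    have hzW' : dist x z = dist x p + dist p z := hzW
    have hzp' : z ≠ p := fun e => hzp e
    have hball' : dist z' z < dist p z := Metric.mem_ball.mp hball
    obtain ⟨m, e1, e2, e3⟩ := branch h x z z'
    have hcm1 : dist m z ≤ dist z z' :=
      by linarith [dist_comm z m ▸ e3, dist_nonneg (x := m) (y := z')]
    have hgm : dist x p < dist x m := by
      have hc1 : dist z z' = dist z' z := dist_comm z z'
      linarith
    obtain ⟨δ', hδ', h0', h1', hp', huniq'⟩ := concat h hzW'.symm
    obtain ⟨δ'', hδ'', h0'', h1'', hm'', huniq''⟩ := concat h e1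
    have harc'' : IsArcIn x z (δ'' '' Set.Icc 0 (dist x z)) := by
      have := isArc_of_iso hδ'' dist_nonneg
      rwa [h0'', h1''] at this
    have himeq : δ'' '' Set.Icc 0 (dist x z) = δ' '' Set.Icc 0 (dist x z) :=
      huniq' _ harc''
    have hmmem : m ∈ δ' '' Set.Icc 0 (dist x z) := by
      rw [← himeq]
      exact ⟨dist x m, ⟨dist_nonneg, by linarith [dist_nonneg (x := m) (y := z)]⟩, hm''⟩
    obtain ⟨s, hs, hsm⟩ := hmmem
    have hsval : s = dist x m := by
      have := hδ'.dist_zero h0' hs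
      rw [hsm] at this
      exact this.symm
    have hpm : dist p m = dist x m - dist x p := by
      have hmm : δ' (dist x m) = m := hsval ▸ hsm
      have h5 := hδ' (dist x p)
        ⟨dist_nonneg, by linarith [dist_nonneg (x := p) (y := z)]⟩ (dist x m) (hsval ▸ hs)
      rw [hp', hmm, abs_of_nonpos (by linarith)] at h5
      linarith
    have hch : dist x z' ≤ dist x p + dist p z' := dist_triangle _ _ _
    have hch2 : dist x p + dist p z' ≤ dist x z' := by
      have htr := dist_triangle p m z'
      linarith
    exact (le_antisymm hch hch2 : dist x z' = _)
  have hWclosed : IsClosed W := by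
    apply isClosed_eq
    · exact continuous_const.dist continuous_id
    · exact continuous_const.add (continuous_const.dist continuous_id)
  have hyU : y ∈ U := by
    apply Set.mem_biUnion (show y ∈ W \ {p} from ⟨hyW, fun e => hpy ((Set.mem_singleton_iff.mp e).symm)⟩)
    exact Metric.mem_ball_self (dist_pos.mpr hpy)
  have cover : A ⊆ U ∪ Wᶜ := by
    intro w hwA
    by_cases hwW : w ∈ W
    · left
      have hwp : w ≠ p := fun e => hpA (e ▸ hwA)
      exact Set.mem_biUnion (show w ∈ W \ {p} from ⟨hwW, fun e => hwp (Set.mem_singleton_iff.mp e)⟩)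
        (Metric.mem_ball_self (dist_pos.mpr fun e => hwp e.symm))
    · right; exact hwW
  obtain ⟨w, hwA, hw⟩ := hA U Wᶜ hUopen hWclosed.isOpen_compl cover ⟨y, hy, hyU⟩ ⟨x, hx, hxW⟩
  exact hw.2 (hUW hw.1)

end RTreeAux

open RTreeAux

/-- If two stable subtrees of an ℝ-tree meet in more than one point, their union is a
stable subtree. -/
theorem union_of_stable_subtrees {T : Type*} [MetricSpace T] (h : IsRTree T)
    {G : Type*} [Group G] (ρ : G →* (T ≃ᵢ T)) (T₁ T₂ : Set T)
    (h₁ : IsStableSubtree ρ T₁) (h₂ : IsStableSubtree ρ T₂)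
    (hint : Nondegenerate (T₁ ∩ T₂)) :
    IsStableSubtree ρ (T₁ ∪ T₂) := by
  obtain ⟨p, hp, q, hq, hpq⟩ := hint
  obtain ⟨δ, hδ, hδ0, hδ1, hδuniq⟩ := exists_param h p q
  set Sg := δ '' Set.Icc 0 (dist p q) with hSgdef
  have harc : IsArcIn p q Sg := by
    have := isArc_of_iso hδ dist_nonneg
    rwa [hδ0, hδ1] at this
  have hSgconn : IsConnected Sg :=
    ⟨⟨p, ⟨0, ⟨le_refl _, dist_nonneg⟩, hδ0⟩⟩, isPreconnected_Icc.image δ hδ.continuousOn⟩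
  have hSgnd : Nondegenerate Sg :=
    ⟨p, ⟨0, ⟨le_refl _, dist_nonneg⟩, hδ0⟩, q, ⟨dist p q, ⟨dist_nonneg, le_rfl⟩, hδ1⟩, hpq⟩
  have hSg1 : Sg ⊆ T₁ := arc_subset h h₁.1.isPreconnected hp.1 hq.1 harc
  have hSg2 : Sg ⊆ T₂ := arc_subset h h₂.1.isPreconnected hp.2 hq.2 harc
  have e1 : fixOf ρ Sg = fixOf ρ T₁ := h₁.2.2 Sg hSg1 hSgconn hSgnd
  have e2 : fixOf ρ Sg = fixOf ρ T₂ := h₂.2.2 Sg hSg2 hSgconn hSgnd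
  have e12 : fixOf ρ T₁ = fixOf ρ T₂ := e1.symm.trans e2
  have eU : fixOf ρ (T₁ ∪ T₂) = fixOf ρ T₁ := by
    apply Set.Subset.antisymm
    · intro g hg z hz
      exact hg z (Or.inl hz)
    · intro g hg z hz
      rcases hz with hz | hz
      · exact hg z hz
      · have hg2 : g ∈ fixOf ρ T₂ := e12 ▸ hg
        exact hg2 z hz
  refine ⟨IsConnected.union ⟨p, hp⟩ h₁.1 h₂.1,
    ⟨p, Or.inl hp.1, q, Or.inl hq.1, hpq⟩, ?_⟩
  intro S' hsub hconn hnd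
  obtain ⟨u, hu, v, hv, huv⟩ := hnd
  have hl : 0 < dist u v := dist_pos.mpr huv
  obtain ⟨α, hαiso, hα0, hα1, hαuniq⟩ := exists_param h u v
  have harcS' : IsArcIn u v (α '' Set.Icc 0 (dist u v)) := by
    have := isArc_of_iso hαiso dist_nonneg
    rwa [hα0, hα1] at this
  have hαS : α '' Set.Icc 0 (dist u v) ⊆ S' :=
    arc_subset h hconn.isPreconnected hu hv harcS'
  have key : ∀ Tj : Set T, IsStableSubtree ρ Tj → fixOf ρ Tj = fixOf ρ T₁ →
      ∀ s t : ℝ, 0 ≤ s → s < t → t ≤ dist u v → α s ∈ Tj → α t ∈ Tj →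
      fixOf ρ S' = fixOf ρ (T₁ ∪ T₂) := by
    intro Tj hj hTj s t hs hst ht hαs hαt
    have hiso' : IsoOn α s t := hαiso.mono hs ht
    have harc' : IsArcIn (α s) (α t) (α '' Set.Icc s t) := isArc_of_iso hiso' hst.le
    have hsubj : α '' Set.Icc s t ⊆ Tj :=
      arc_subset h hj.1.isPreconnected hαs hαt harc'
    have hconn' : IsConnected (α '' Set.Icc s t) :=
      ⟨⟨α s, s, ⟨le_rfl, hst.le⟩, rfl⟩, isPreconnected_Icc.image α hiso'.continuousOn⟩
    have hnd' : Nondegenerate (α '' Set.Icc s t) := by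
      refine ⟨α s, ⟨s, ⟨le_rfl, hst.le⟩, rfl⟩, α t, ⟨t, ⟨hst.le, le_rfl⟩, rfl⟩, ?_⟩
      intro he
      have h2 := hiso' s ⟨le_rfl, hst.le⟩ t ⟨hst.le, le_rfl⟩
      rw [he, dist_self] at h2
      have h3 : s - t = 0 := abs_eq_zero.mp h2.symm
      linarith
    have hsub' : α '' Set.Icc s t ⊆ S' :=
      (Set.image_mono (Set.Icc_subset_Icc hs ht) : α '' _ ⊆ α '' _).trans hαS
    have hfix : fixOf ρ (α '' Set.Icc s t) = fixOf ρ Tj := hj.2.2 _ hsubj hconn' hnd'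
    apply Set.Subset.antisymm
    · intro g hg
      have hg2 : g ∈ fixOf ρ (α '' Set.Icc s t) := fun zz hzz => hg zz (hsub' hzz)
      rw [hfix, hTj, ← eU] at hg2
      exact hg2
    · intro g hg zz hzz
      exact hg zz (hsub hzz)
  set M := dist u v with hMdef
  have hu' : α 0 ∈ T₁ ∪ T₂ := hsub (hα0.symm ▸ hu)
  have hv' : α M ∈ T₁ ∪ T₂ := hsub (hα1.symm ▸ hv)
  have hmid : α (M / 2) ∈ T₁ ∪ T₂ :=
    hsub (hαS ⟨M / 2, ⟨by linarith, by linarith⟩, rfl⟩)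
  have hM2 : 0 < M / 2 := by linarith
  rcases hu' with h1 | h1 <;> rcases hmid with h2 | h2 <;> rcases hv' with h3 | h3
  · exact key T₁ h₁ rfl 0 (M / 2) le_rfl hM2 (by linarith) h1 h2
  · exact key T₁ h₁ rfl 0 (M / 2) le_rfl hM2 (by linarith) h1 h2
  · exact key T₁ h₁ rfl 0 M le_rfl hl le_rfl h1 h3
  · exact key T₂ h₂ e12.symm (M / 2) M (by linarith) (by linarith) le_rfl h2 h3
  · exact key T₁ h₁ rfl (M / 2) M (by linarith) (by linarith) le_rfl h2 h3
  · exact key T₂ h₂ e12.symm 0 M le_rfl hl le_rfl h1 h3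
  · exact key T₂ h₂ e12.symm 0 (M / 2) le_rfl hM2 (by linarith) h1 h2
  · exact key T₂ h₂ e12.symm 0 (M / 2) le_rfl hM2 (by linarith) h1 h2
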